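/- Let r > 2 and let L be an even lattice of signature (1,1) with discriminant form isometric to that of U(r). Then L ≅ U(r). Equivalently, the genus of U(r) contains a single isometry class. -/

import Mathlib

lemma u_binary (A Q C : ℤ) (h : 4*A*C - Q*Q = -1) :
    ∃ a b c d : ℤ, (a*d - b*c = 1 ∨ a*d - b*c = -1) ∧
      A*a*a + Q*a*b + C*b*b = 0 ∧ A*c*c + Q*c*d + C*d*d = 0 ∧
      2*A*a*c + Q*(a*d + b*c) + 2*C*b*d = 1 := by
  by_cases hA : A = 0
  · subst hA
    have hQ : Q = 1 ∨ Q = -1 := Int.isUnit_iff.mp (IsUnit.of_mul_eq_one (a := Q) Q (by linarith))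
    rcases hQ with h1 | h1 <;> subst h1
    · exact ⟨1, 0, -C, 1, Or.inl (by ring), by ring, by ring, by ring⟩
    · exact ⟨-1, 0, C, 1, Or.inr (by ring), by ring, by ring, by ring⟩
  · have hodd : Odd Q := by
      rcases Int.even_or_odd Q with ⟨t, ht⟩ | ho
      · exfalso
        have ht2 : (4:ℤ) ∣ (-1) := ⟨A*C - t*t, by rw [ht] at h; linarith [h]⟩
        norm_num at ht2
      · exact ho
    obtain ⟨g, hg⟩ := hodd
    have hgh : g * (g + 1) = A * C := by
      have hq2 : Q*Q = 4*(g*g) + 4*g + 1 := by rw [hg]; ring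
      have hexp : g*(g+1) = g*g + g := by ring
      linarith
    set u : ℤ := (Int.gcd A g : ℤ) with hu
    have hu0 : u ≠ 0 := by
      simp only [hu]
      exact_mod_cast fun hc => hA (by
        have := Int.gcd_eq_zero_iff.mp (by exact_mod_cast hc)
        exact this.1)
    obtain ⟨A', hA'⟩ : u ∣ A := Int.gcd_dvd_left A g
    obtain ⟨g', hg'⟩ : u ∣ g := Int.gcd_dvd_right A g
    have hA'0 : A' ≠ 0 := by rintro rfl; simp at hA'; exact hA hA'
    have hcop : IsCoprime A' g' := by
      rw [Int.isCoprime_iff_gcd_eq_one]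
      have hpos : 0 < Int.gcd A g := by
        rcases Nat.eq_zero_or_pos (Int.gcd A g) with h0 | h0
        · exact absurd (Int.gcd_eq_zero_iff.mp h0).1 hA
        · exact h0
      have h1 : A / u = A' := by rw [hA']; exact Int.mul_ediv_cancel_left _ hu0
      have h2 : g / u = g' := by rw [hg']; exact Int.mul_ediv_cancel_left _ hu0
      rw [← h1, ← h2, hu]
      exact Int.gcd_div_gcd_div_gcd hpos
    have hkey : g' * (g + 1) = A' * C := by
      have hc : u * (g' * (g + 1)) = u * (A' * C) := by
        calc u * (g' * (g + 1)) = g * (g+1) := by rw [hg']; ring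
        _ = A * C := hgh
        _ = u * (A' * C) := by rw [hA']; ring
      exact mul_left_cancel₀ hu0 hc
    have hdvd : A' ∣ (g + 1) := hcop.dvd_of_dvd_mul_left ⟨C, by linarith [hkey]⟩
    obtain ⟨h', hh'⟩ := hdvd
    have hC : g' * h' = C := by
      have hc : A' * (g' * h') = A' * C := by rw [← hkey, hh']; ring
      exact mul_left_cancel₀ hA'0 hc
    have hQalt : Q = A' * h' + u * g' := by linarith [hg, hg', hh']
    -- Bezout
    obtain ⟨e, z, hbez⟩ := hcop
    -- l' = (g', -A'), m' = (e, z): det = g'*z + A'*e = ?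
    -- hbez : z * A' + e * g' = 1
    have hq1 : A * g' * g' + Q * g' * (-A') + C * (-A') * (-A') = 0 := by
      rw [hA', hQalt, ← hC]; ring
    -- pairing identity for any c1 d1
    have main : ∀ c1 d1 : ℤ, g' * d1 + A' * c1 = 1 →
        (2*A*g'*c1 + Q*(g'*d1 + (-A')*c1) + 2*C*(-A')*d1 = 1 ∨
         2*A*g'*c1 + Q*(g'*d1 + (-A')*c1) + 2*C*(-A')*d1 = -1) := by
      intro c1 d1 hdet
      have hid : 4*(A*g'*g' + Q*g'*(-A') + C*(-A')*(-A'))*(A*c1*c1 + Q*c1*d1 + C*d1*d1)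
          - (2*A*g'*c1 + Q*(g'*d1 + (-A')*c1) + 2*C*(-A')*d1)^2
          = (g'*d1 - (-A')*c1)^2*(4*A*C - Q*Q) := by ring
      have h2 : (2*A*g'*c1 + Q*(g'*d1 + (-A')*c1) + 2*C*(-A')*d1)^2 = 1 := by
        rw [hq1] at hid
        have : g'*d1 - (-A')*c1 = 1 := by linarith [hdet]
        rw [this, h] at hid; linarith
      set k : ℤ := 2*A*g'*c1 + Q*(g'*d1 + (-A')*c1) + 2*C*(-A')*d1 with hk
      exact Int.isUnit_iff.mp (IsUnit.of_mul_eq_one (a := k) k (by linear_combination h2))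
    -- choose (c1,d1) = (e,z) or (-e,-z)
    have hdet1 : g' * z + A' * e = 1 := by linear_combination hbez
    rcases main e z hdet1 with hk | hk
    · -- pairing already 1 ; l'=(g',-A'), m1=(e,z), det = g'*z-(-A')*e = 1
      -- w := q(m1)
      set w : ℤ := A*e*e + Q*e*z + C*z*z with hw
      refine ⟨g', -A', e - w*g', z - w*(-A'), Or.inl (by linear_combination hdet1), by linear_combination hq1, ?_, ?_⟩
      · linear_combination (w*w)*hq1 + (-w)*hk
      · linear_combination hk + (-2*w)*hq1
    · -- pairing -1: use m1 = (-e,-z)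
      set w : ℤ := A*e*e + Q*e*z + C*z*z with hw
      refine ⟨g', -A', -e - w*g', -z - w*(-A'), Or.inr (by linear_combination -hdet1), by linear_combination hq1, ?_, ?_⟩
      · linear_combination (w*w)*hq1 + w*hk
      · linear_combination (-1)*hk + (-2*w)*hq1

lemma span_killer {M : Type*} [AddCommGroup M] [Module ℚ M] (xb yb : M)
    (hA : ∀ t : ℚ, ∃ a b : ℤ, t • xb = (a:ℚ) • xb + (b:ℚ) • yb)
    (hB : ∀ t : ℚ, ∃ a b : ℤ, t • yb = (a:ℚ) • xb + (b:ℚ) • yb) :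
    xb = 0 ∧ yb = 0 := by
  have half : ∀ (a : ℤ), (1/2 : ℚ) - (a:ℚ) ≠ 0 := by
    intro a h
    have h2 : ((2*a : ℤ) : ℚ) = ((1:ℤ) : ℚ) := by push_cast; linarith
    have h3 : (2*a : ℤ) = 1 := Int.cast_injective h2
    omega
  have hy0 : yb = 0 := by
    by_contra hy
    obtain ⟨a, b, hab⟩ := hA (1/2)
    have h1 : ((1/2 : ℚ) - a) • xb = (b:ℚ) • yb := by
      rw [sub_smul, hab]; abel
    have hx_eq : xb = (((1/2 : ℚ) - a)⁻¹ * b) • yb := by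
      calc xb = ((1/2 : ℚ) - a)⁻¹ • (((1/2:ℚ) - a) • xb) := (inv_smul_smul₀ (half a) xb).symm
      _ = _ := by rw [h1, smul_smul]
    set c : ℚ := ((1/2 : ℚ) - a)⁻¹ * b with hc
    obtain ⟨a2, b2, hab2⟩ := hB (1 / (2 * (c.den : ℚ)))
    rw [hx_eq, smul_smul, ← add_smul] at hab2
    have hsceq : (1:ℚ) / (2 * (c.den : ℚ)) = (a2:ℚ)*c + b2 := by
      by_contra hne
      apply hy
      have h0 : ((1:ℚ)/(2*(c.den:ℚ)) - ((a2:ℚ)*c + b2)) • yb = 0 := by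
        rw [sub_smul, hab2, sub_self]
      have hs : ((1:ℚ)/(2*(c.den:ℚ)) - ((a2:ℚ)*c + b2)) ≠ 0 := sub_ne_zero.mpr hne
      calc yb = _ • _ := (inv_smul_smul₀ hs yb).symm
      _ = 0 := by rw [h0, smul_zero]
    -- contradiction by parity
    have hden : ((c.den : ℚ)) ≠ 0 := by
      exact_mod_cast c.den_ne_zero
    have hcd : c * (c.den : ℚ) = (c.num : ℚ) := by
      have h := Rat.num_div_den c
      rw [div_eq_iff hden] at h
      linarith [h]
    rw [div_eq_iff (by positivity)] at hsceq
    have h5 : (1:ℚ) = ((2*(a2*c.num + b2*c.den) : ℤ) : ℚ) := by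
      push_cast
      linear_combination hsceq + 2*(a2:ℚ)*hcd
    have h6 : (1:ℤ) = 2*(a2*c.num + b2*c.den) := by exact_mod_cast h5
    omega
  refine ⟨?_, hy0⟩
  obtain ⟨a, b, hab⟩ := hA (1/2)
  rw [hy0, smul_zero, add_zero] at hab
  have h1 : ((1/2 : ℚ) - a) • xb = 0 := by rw [sub_smul, hab, sub_self]
  calc xb = _ • _ := (inv_smul_smul₀ (half a) xb).symm
  _ = 0 := by rw [h1, smul_zero]

set_option maxHeartbeats 1000000 in
theorem stmt_15
    (r : ℕ) (hr : 2 < r)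
    (V : Type) [AddCommGroup V] [Module ℚ V]
    (B : V →ₗ[ℚ] V →ₗ[ℚ] ℚ)
    (hsymm : ∀ x y, B x y = B y x)
    (l₀ m₀ : V)
    (hindep : LinearIndependent ℚ ![l₀, m₀])
    (L : Submodule ℤ V)
    (hL : L = Submodule.span ℤ {l₀, m₀})
    (hint : ∀ x ∈ L, ∀ y ∈ L, ∃ n : ℤ, B x y = (n : ℚ))
    (heven : ∀ x ∈ L, ∃ n : ℤ, B x x = 2 * (n : ℚ))
    (hsig : B l₀ l₀ * B m₀ m₀ - B l₀ m₀ * B l₀ m₀ < 0)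
    (x y : V)
    (hx : ∀ z ∈ L, ∃ n : ℤ, B x z = (n : ℚ))
    (hy : ∀ z ∈ L, ∃ n : ℤ, B y z = (n : ℚ))
    (hgen : ∀ w : V, (∀ z ∈ L, ∃ n : ℤ, B w z = (n : ℚ)) →
      ∃ (a b : ℤ) (u : V), u ∈ L ∧ w = a • x + b • y + u)
    (horder : ∀ a b : ℤ, a • x + b • y ∈ L → (r : ℤ) ∣ a ∧ (r : ℤ) ∣ b)
    (hqx : ∃ n : ℤ, B x x = 2 * (n : ℚ))
    (hqy : ∃ n : ℤ, B y y = 2 * (n : ℚ))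
    (hbxy : ∃ n : ℤ, B x y = 1 / (r : ℚ) + (n : ℚ)) :
    ∃ l m : V, l ∈ L ∧ m ∈ L ∧ L = Submodule.span ℤ {l, m} ∧
      B l l = 0 ∧ B m m = 0 ∧ B l m = (r : ℚ) := by
  have hr0 : (r : ℚ) ≠ 0 := by positivity
  have hrZ : (r : ℤ) ≠ 0 := by positivity
  -- memberships
  have hl₀L : l₀ ∈ L := by rw [hL]; exact Submodule.subset_span (by simp)
  have hm₀L : m₀ ∈ L := by rw [hL]; exact Submodule.subset_span (by simp)
  -- membership characterization with ℚ-scalars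
  have memL : ∀ z : V, z ∈ L ↔ ∃ a b : ℤ, z = ((a:ℚ)) • l₀ + ((b:ℚ)) • m₀ := by
    intro z
    rw [hL, Submodule.mem_span_pair]
    constructor
    · rintro ⟨a, b, hab⟩
      exact ⟨a, b, by rw [← hab, Int.cast_smul_eq_zsmul, Int.cast_smul_eq_zsmul]⟩
    · rintro ⟨a, b, hab⟩
      exact ⟨a, b, by rw [hab, Int.cast_smul_eq_zsmul, Int.cast_smul_eq_zsmul]⟩
  -- uniqueness of coordinates
  have uniq : ∀ a b c d : ℚ, a • l₀ + b • m₀ = c • l₀ + d • m₀ → a = c ∧ b = d := by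
    intro a b c d h
    have h0 : (a - c) • l₀ + (b - d) • m₀ = 0 := by
      rw [sub_smul, sub_smul]
      rw [sub_add_sub_comm, h, sub_self]
    obtain ⟨h1, h2⟩ := LinearIndependent.pair_iff.mp hindep _ _ h0
    constructor <;> linarith [h1, h2]
  -- bilinear expansion
  have hBexp : ∀ a b c d : ℚ, B (a • l₀ + b • m₀) (c • l₀ + d • m₀)
      = a*c*(B l₀ l₀) + (a*d + b*c)*(B l₀ m₀) + b*d*(B m₀ m₀) := by
    intro a b c d
    have hml : B m₀ l₀ = B l₀ m₀ := hsymm m₀ l₀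
    simp only [map_add, map_smul, LinearMap.add_apply, LinearMap.smul_apply, smul_eq_mul, hml]
    ring
  -- ℚ-span and x, y ∈ span
  set S : Submodule ℚ V := Submodule.span ℚ {l₀, m₀} with hS
  have hl₀S : l₀ ∈ S := Submodule.subset_span (by simp)
  have hm₀S : m₀ ∈ S := Submodule.subset_span (by simp)
  have hLS : ∀ z ∈ L, z ∈ S := by
    intro z hz
    rw [hL] at hz
    refine Submodule.span_induction ?_ ?_ ?_ ?_ hz
    · intro w hw
      rcases hw with h | h
      · rw [h]; exact hl₀S
      · simp only [Set.mem_singleton_iff] at h; rw [h]; exact hm₀S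
    · exact Submodule.zero_mem S
    · intro a b _ _ ha hb; exact Submodule.add_mem S ha hb
    · intro n w _ hw
      rw [← Int.cast_smul_eq_zsmul ℚ]
      exact Submodule.smul_mem S _ hw
  -- D and e-basis
  set P : ℚ := B l₀ l₀ with hP
  set q : ℚ := B l₀ m₀ with hq
  set s : ℚ := B m₀ m₀ with hs
  set D : ℚ := P * s - q * q with hD
  have hDneg : D < 0 := hsig
  have hD0 : D ≠ 0 := ne_of_lt hDneg
  set e₁ : V := (s/D) • l₀ + (-(q/D)) • m₀ with he₁def
  set e₂ : V := (-(q/D)) • l₀ + (P/D) • m₀ with he₂def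
  have hBe₁ : ∀ a b : ℚ, B e₁ (a • l₀ + b • m₀) = a := by
    intro a b
    rw [he₁def, hBexp]
    field_simp
    ring
  have hBe₂ : ∀ a b : ℚ, B e₂ (a • l₀ + b • m₀) = b := by
    intro a b
    rw [he₂def, hBexp]
    field_simp
    ring
  have hBe₁l : B e₁ l₀ = 1 := by have h := hBe₁ 1 0; simpa using h
  have hBe₁m : B e₁ m₀ = 0 := by have h := hBe₁ 0 1; simpa using h
  have hBe₂l : B e₂ l₀ = 0 := by have h := hBe₂ 1 0; simpa using h
  have hBe₂m : B e₂ m₀ = 1 := by have h := hBe₂ 0 1; simpa using h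
  have he₁S : e₁ ∈ S := Submodule.add_mem _ (Submodule.smul_mem _ _ hl₀S) (Submodule.smul_mem _ _ hm₀S)
  have he₂S : e₂ ∈ S := Submodule.add_mem _ (Submodule.smul_mem _ _ hl₀S) (Submodule.smul_mem _ _ hm₀S)
  -- x, y in S
  have hAgen : ∀ v : V, ∀ t : ℚ, ∃ a b : ℤ, t • S.mkQ v = (a:ℚ) • S.mkQ x + (b:ℚ) • S.mkQ y := by
    intro v t
    set vt : V := (B v l₀) • e₁ + (B v m₀) • e₂ with hvt
    have hw : ∀ z ∈ L, ∃ n : ℤ, B (t • (v - vt)) z = (n:ℚ) := by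
      intro z hz
      obtain ⟨a, b, hab⟩ := (memL z).mp hz
      refine ⟨0, ?_⟩
      push_cast
      rw [hab, hvt]
      simp only [map_smul, map_sub, map_add, LinearMap.smul_apply, LinearMap.sub_apply,
        LinearMap.add_apply, smul_eq_mul]
      rw [hBe₁l, hBe₁m, hBe₂l, hBe₂m]
      ring
    obtain ⟨aw, bw, u, huL, hdec⟩ := hgen _ hw
    refine ⟨aw, bw, ?_⟩
    have hu0 : S.mkQ u = 0 := by
      simpa [Submodule.mkQ_apply] using (Submodule.Quotient.mk_eq_zero S).mpr (hLS u huL)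
    have hvt0 : S.mkQ vt = 0 := by
      have hvtS : vt ∈ S := Submodule.add_mem _ (Submodule.smul_mem _ _ he₁S) (Submodule.smul_mem _ _ he₂S)
      simpa [Submodule.mkQ_apply] using (Submodule.Quotient.mk_eq_zero S).mpr hvtS
    have h1 : S.mkQ (t • (v - vt)) = (aw:ℚ) • S.mkQ x + (bw:ℚ) • S.mkQ y := by
      rw [hdec]
      simp only [map_add, map_zsmul, hu0, add_zero]
      rw [Int.cast_smul_eq_zsmul ℚ, Int.cast_smul_eq_zsmul ℚ]
    rw [map_smul, map_sub, hvt0, sub_zero] at h1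
    exact h1
  have hxyS : x ∈ S ∧ y ∈ S := by
    obtain ⟨hx0, hy0⟩ := span_killer (S.mkQ x) (S.mkQ y) (hAgen x) (hAgen y)
    constructor
    · exact (Submodule.Quotient.mk_eq_zero S).mp (by simpa [Submodule.mkQ_apply] using hx0)
    · exact (Submodule.Quotient.mk_eq_zero S).mp (by simpa [Submodule.mkQ_apply] using hy0)
  obtain ⟨x₁, x₂, hxc⟩ : ∃ x₁ x₂ : ℚ, x = x₁ • l₀ + x₂ • m₀ := by
    obtain ⟨a, b, hab⟩ := Submodule.mem_span_pair.mp hxyS.1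
    exact ⟨a, b, hab.symm⟩
  obtain ⟨y₁, y₂, hyc⟩ : ∃ y₁ y₂ : ℚ, y = y₁ • l₀ + y₂ • m₀ := by
    obtain ⟨a, b, hab⟩ := Submodule.mem_span_pair.mp hxyS.2
    exact ⟨a, b, hab.symm⟩
  -- basic integer quantities
  obtain ⟨aI, haI⟩ := heven l₀ hl₀L
  obtain ⟨cI, hcI⟩ := heven m₀ hm₀L
  obtain ⟨qI, hqI⟩ := hint l₀ hl₀L m₀ hm₀L
  obtain ⟨nx, hnx0⟩ := hqx
  obtain ⟨ny, hny0⟩ := hqy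
  obtain ⟨nb, hnb0⟩ := hbxy
  -- pairing coordinates
  obtain ⟨αZ, hα0⟩ := hx l₀ hl₀L
  obtain ⟨βZ, hβ0⟩ := hx m₀ hm₀L
  obtain ⟨γZ, hγ0⟩ := hy l₀ hl₀L
  obtain ⟨δZ, hδ0⟩ := hy m₀ hm₀L
  have hl₀w : l₀ = (1:ℚ) • l₀ + (0:ℚ) • m₀ := by simp
  have hm₀w : m₀ = (0:ℚ) • l₀ + (1:ℚ) • m₀ := by simp
  have hα : (αZ:ℚ) = x₁*P + x₂*q := by
    rw [← hα0, hxc]; nth_rewrite 2 [hl₀w]; rw [hBexp]; ring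
  have hβ : (βZ:ℚ) = x₁*q + x₂*s := by
    rw [← hβ0, hxc]; nth_rewrite 2 [hm₀w]; rw [hBexp]; ring
  have hγ : (γZ:ℚ) = y₁*P + y₂*q := by
    rw [← hγ0, hyc]; nth_rewrite 2 [hl₀w]; rw [hBexp]; ring
  have hδ : (δZ:ℚ) = y₁*q + y₂*s := by
    rw [← hδ0, hyc]; nth_rewrite 2 [hm₀w]; rw [hBexp]; ring
  -- quadratic values in coordinates
  have hnx : x₁*x₁*P + (x₁*x₂ + x₂*x₁)*q + x₂*x₂*s = 2*(nx:ℚ) := by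
    rw [← hBexp, ← hxc]; exact hnx0
  have hny : y₁*y₁*P + (y₁*y₂ + y₂*y₁)*q + y₂*y₂*s = 2*(ny:ℚ) := by
    rw [← hBexp, ← hyc]; exact hny0
  have hnb : x₁*y₁*P + (x₁*y₂ + x₂*y₁)*q + x₂*y₂*s = 1/(r:ℚ) + (nb:ℚ) := by
    rw [← hBexp, ← hxc, ← hyc]; exact hnb0
  -- decompositions of the dual basis
  have he₁dual : ∀ z ∈ L, ∃ n : ℤ, B e₁ z = (n:ℚ) := by
    intro z hz
    obtain ⟨a, b, hab⟩ := (memL z).mp hz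
    exact ⟨a, by rw [hab, hBe₁]⟩
  have he₂dual : ∀ z ∈ L, ∃ n : ℤ, B e₂ z = (n:ℚ) := by
    intro z hz
    obtain ⟨a, b, hab⟩ := (memL z).mp hz
    exact ⟨b, by rw [hab, hBe₂]⟩
  obtain ⟨a₁, b₁, u₁, hu₁L, he₁dec0⟩ := hgen e₁ he₁dual
  obtain ⟨a₂, b₂, u₂, hu₂L, he₂dec0⟩ := hgen e₂ he₂dual
  have he₁dec : e₁ = ((a₁:ℚ)) • x + ((b₁:ℚ)) • y + u₁ := by
    rw [he₁dec0, Int.cast_smul_eq_zsmul ℚ, Int.cast_smul_eq_zsmul ℚ]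
  have he₂dec : e₂ = ((a₂:ℚ)) • x + ((b₂:ℚ)) • y + u₂ := by
    rw [he₂dec0, Int.cast_smul_eq_zsmul ℚ, Int.cast_smul_eq_zsmul ℚ]
  obtain ⟨c₁, d₁, hu₁c⟩ := (memL u₁).mp hu₁L
  obtain ⟨c₂, d₂, hu₂c⟩ := (memL u₂).mp hu₂L
  obtain ⟨k₁, hk₁⟩ := hx u₁ hu₁L
  obtain ⟨k₂, hk₂⟩ := hx u₂ hu₂L
  obtain ⟨k₃, hk₃⟩ := hy u₁ hu₁L
  obtain ⟨k₄, hk₄⟩ := hy u₂ hu₂L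
  obtain ⟨nu₁, hnu₁⟩ := heven u₁ hu₁L
  obtain ⟨nu₂, hnu₂⟩ := heven u₂ hu₂L
  -- x₁ = B x e₁ etc.
  have hBxe₁ : B x e₁ = x₁ := by rw [hsymm x e₁, hxc, hBe₁]
  have hBxe₂ : B x e₂ = x₂ := by rw [hsymm x e₂, hxc, hBe₂]
  have hBye₁ : B y e₁ = y₁ := by rw [hsymm y e₁, hyc, hBe₁]
  have hBye₂ : B y e₂ = y₂ := by rw [hsymm y e₂, hyc, hBe₂]
  have hyx0 : B y x = 1/(r:ℚ) + (nb:ℚ) := by rw [hsymm y x]; exact hnb0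
  -- r * coordinates of x and y are integers
  have hX₁ : ((r*(2*a₁*nx + b₁*nb + k₁) + b₁ : ℤ):ℚ) = (r:ℚ) * x₁ := by
    have h1 : x₁ = (a₁:ℚ)*(2*nx) + (b₁:ℚ)*(1/(r:ℚ) + nb) + k₁ := by
      rw [← hBxe₁, he₁dec]
      simp only [map_add, map_smul, smul_eq_mul]
      rw [hnx0, hnb0, hk₁]
    rw [h1]; push_cast; field_simp; ring
  have hX₂ : ((r*(2*a₂*nx + b₂*nb + k₂) + b₂ : ℤ):ℚ) = (r:ℚ) * x₂ := by
    have h1 : x₂ = (a₂:ℚ)*(2*nx) + (b₂:ℚ)*(1/(r:ℚ) + nb) + k₂ := by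
      rw [← hBxe₂, he₂dec]
      simp only [map_add, map_smul, smul_eq_mul]
      rw [hnx0, hnb0, hk₂]
    rw [h1]; push_cast; field_simp; ring
  have hY₁ : ((r*(a₁*nb + 2*b₁*ny + k₃) + a₁ : ℤ):ℚ) = (r:ℚ) * y₁ := by
    have h1 : y₁ = (a₁:ℚ)*(1/(r:ℚ) + nb) + (b₁:ℚ)*(2*ny) + k₃ := by
      rw [← hBye₁, he₁dec]
      simp only [map_add, map_smul, smul_eq_mul]
      rw [hyx0, hny0, hk₃]
    rw [h1]; push_cast; field_simp; ring
  have hY₂ : ((r*(a₂*nb + 2*b₂*ny + k₄) + a₂ : ℤ):ℚ) = (r:ℚ) * y₂ := by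
    have h1 : y₂ = (a₂:ℚ)*(1/(r:ℚ) + nb) + (b₂:ℚ)*(2*ny) + k₄ := by
      rw [← hBye₂, he₂dec]
      simp only [map_add, map_smul, smul_eq_mul]
      rw [hyx0, hny0, hk₄]
    rw [h1]; push_cast; field_simp; ring
  -- name the integer r-coordinates
  set X₁ : ℤ := r*(2*a₁*nx + b₁*nb + k₁) + b₁ with hX₁def
  set X₂ : ℤ := r*(2*a₂*nx + b₂*nb + k₂) + b₂ with hX₂def
  set Y₁ : ℤ := r*(a₁*nb + 2*b₁*ny + k₃) + a₁ with hY₁def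
  set Y₂ : ℤ := r*(a₂*nb + 2*b₂*ny + k₄) + a₂ with hY₂def
  -- coordinate equations for e₁, e₂
  have hco1 : s/D = (a₁:ℚ)*x₁ + (b₁:ℚ)*y₁ + (c₁:ℚ) ∧ -(q/D) = (a₁:ℚ)*x₂ + (b₁:ℚ)*y₂ + (d₁:ℚ) := by
    refine uniq _ _ _ _ ?_
    rw [← he₁def, he₁dec, hxc, hyc, hu₁c]
    module
  have hco2 : -(q/D) = (a₂:ℚ)*x₁ + (b₂:ℚ)*y₁ + (c₂:ℚ) ∧ P/D = (a₂:ℚ)*x₂ + (b₂:ℚ)*y₂ + (d₂:ℚ) := by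
    refine uniq _ _ _ _ ?_
    rw [← he₂def, he₂dec, hxc, hyc, hu₂c]
    module
  -- the integer matrix r * G⁻¹
  set S₁ : ℤ := a₁*X₁ + b₁*Y₁ + r*c₁ with hS₁def
  set Q₁ : ℤ := a₁*X₂ + b₁*Y₂ + r*d₁ with hQ₁def
  set Q₂ : ℤ := a₂*X₁ + b₂*Y₁ + r*c₂ with hQ₂def
  set P₁ : ℤ := a₂*X₂ + b₂*Y₂ + r*d₂ with hP₁def
  have hS₁ : (S₁:ℚ) * D = (r:ℚ) * s := by
    have h1 : (S₁:ℚ) = (a₁:ℚ)*((X₁:ℤ):ℚ) + (b₁:ℚ)*((Y₁:ℤ):ℚ) + (r:ℚ)*(c₁:ℚ) := by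
      rw [hS₁def]; push_cast; ring
    rw [h1, hX₁, hY₁]
    have h2 : (a₁:ℚ)*((r:ℚ)*x₁) + (b₁:ℚ)*((r:ℚ)*y₁) + (r:ℚ)*(c₁:ℚ) = (r:ℚ)*((a₁:ℚ)*x₁ + (b₁:ℚ)*y₁ + (c₁:ℚ)) := by ring
    rw [h2, ← hco1.1]
    field_simp
  have hQ₁ : (Q₁:ℚ) * D = -((r:ℚ) * q) := by
    have h1 : (Q₁:ℚ) = (a₁:ℚ)*((X₂:ℤ):ℚ) + (b₁:ℚ)*((Y₂:ℤ):ℚ) + (r:ℚ)*(d₁:ℚ) := by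
      rw [hQ₁def]; push_cast; ring
    rw [h1, hX₂, hY₂]
    have h2 : (a₁:ℚ)*((r:ℚ)*x₂) + (b₁:ℚ)*((r:ℚ)*y₂) + (r:ℚ)*(d₁:ℚ) = (r:ℚ)*((a₁:ℚ)*x₂ + (b₁:ℚ)*y₂ + (d₁:ℚ)) := by ring
    rw [h2, ← hco1.2]
    field_simp
  have hQ₂ : (Q₂:ℚ) * D = -((r:ℚ) * q) := by
    have h1 : (Q₂:ℚ) = (a₂:ℚ)*((X₁:ℤ):ℚ) + (b₂:ℚ)*((Y₁:ℤ):ℚ) + (r:ℚ)*(c₂:ℚ) := by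
      rw [hQ₂def]; push_cast; ring
    rw [h1, hX₁, hY₁]
    have h2 : (a₂:ℚ)*((r:ℚ)*x₁) + (b₂:ℚ)*((r:ℚ)*y₁) + (r:ℚ)*(c₂:ℚ) = (r:ℚ)*((a₂:ℚ)*x₁ + (b₂:ℚ)*y₁ + (c₂:ℚ)) := by ring
    rw [h2, ← hco2.1]
    field_simp
  have hP₁ : (P₁:ℚ) * D = (r:ℚ) * P := by
    have h1 : (P₁:ℚ) = (a₂:ℚ)*((X₂:ℤ):ℚ) + (b₂:ℚ)*((Y₂:ℤ):ℚ) + (r:ℚ)*(d₂:ℚ) := by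
      rw [hP₁def]; push_cast; ring
    rw [h1, hX₂, hY₂]
    have h2 : (a₂:ℚ)*((r:ℚ)*x₂) + (b₂:ℚ)*((r:ℚ)*y₂) + (r:ℚ)*(d₂:ℚ) = (r:ℚ)*((a₂:ℚ)*x₂ + (b₂:ℚ)*y₂ + (d₂:ℚ)) := by ring
    rw [h2, ← hco2.2]
    field_simp
  -- determinant of r * G⁻¹ is -1
  set dd : ℤ := S₁*P₁ - Q₁*Q₂ with hdddef
  have hdd : (dd:ℚ) * D = (r:ℚ)^2 := by
    have h1 : ((dd:ℚ)) * D * D = (r:ℚ)^2 * D := by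
      have hexp : ((dd:ℚ)) * D * D = ((S₁:ℚ)*D) * ((P₁:ℚ)*D) - ((Q₁:ℚ)*D)*((Q₂:ℚ)*D) := by
        push_cast [hdddef]; ring
      rw [hexp, hS₁, hP₁, hQ₁, hQ₂, hD]; ring
    calc (dd:ℚ) * D = ((dd:ℚ) * D * D) / D := by field_simp
    _ = ((r:ℚ)^2 * D)/D := by rw [h1]
    _ = (r:ℚ)^2 := by field_simp
  set Δ : ℤ := X₁*Y₂ - X₂*Y₁ with hΔdef
  set Φ : ℤ := αZ*δZ - βZ*γZ with hΦdef
  have hΔq : (Δ:ℚ) = (r:ℚ)^2 * (x₁*y₂ - x₂*y₁) := by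
    push_cast [hΔdef]
    rw [hX₁, hX₂, hY₁, hY₂]
    ring
  have hΔD : (Δ:ℚ) * D = (r:ℚ)^2 * (Φ:ℚ) := by
    rw [hΔq, hD]
    push_cast [hΦdef]
    rw [hα, hβ, hγ, hδ]
    ring
  set E : ℤ := 4*(r:ℤ)^2*nx*ny - (1+(r:ℤ)*nb)^2 with hEdef
  have hΔ2D : (Δ:ℚ)^2 * D = (r:ℚ)^2 * (E:ℚ) := by
    rw [hΔq, hD]
    push_cast [hEdef]
    have hnb' : (r:ℚ)*(x₁*y₁*P + (x₁*y₂ + x₂*y₁)*q + x₂*y₂*s) = 1 + (r:ℚ)*nb := by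
      rw [hnb]; field_simp
    linear_combination ((r:ℚ)^4*(y₁*y₁*P + (y₁*y₂+y₂*y₁)*q + y₂*y₂*s))*hnx + (2*(r:ℚ)^4*(nx:ℚ))*hny - ((r:ℚ)^2*((r:ℚ)*(x₁*y₁*P + (x₁*y₂+x₂*y₁)*q + x₂*y₂*s) + 1 + (r:ℚ)*nb))*hnb'
  have hΔΦ : Δ = dd * Φ := by
    have h1 : (Δ:ℚ) * D = ((dd:ℚ) * (Φ:ℚ)) * D := by
      rw [hΔD]
      linear_combination (-(Φ:ℚ))*hdd
    have h2 := mul_right_cancel₀ hD0 h1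
    exact_mod_cast h2
  have hEd : E = dd * Φ^2 := by
    have h1 : (r:ℚ)^2*(E:ℚ) = (r:ℚ)^2*((dd:ℚ)*(Φ:ℚ)^2) := by
      rw [← hΔ2D]
      have hc : (Δ:ℚ) = (dd:ℚ)*(Φ:ℚ) := by exact_mod_cast hΔΦ
      rw [hc]
      linear_combination ((dd:ℚ)*(Φ:ℚ)^2)*hdd
    have hr2 : ((r:ℚ)^2) ≠ 0 := pow_ne_zero _ hr0
    have h2 : (E:ℚ) = (dd:ℚ)*(Φ:ℚ)^2 := mul_left_cancel₀ hr2 h1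
    exact_mod_cast h2
  have haI' : P = 2*(aI:ℚ) := by rw [hP]; exact haI
  have hcI' : s = 2*(cI:ℚ) := by rw [hs]; exact hcI
  have hqI' : q = (qI:ℚ) := by rw [hq]; exact hqI
  have hDIq : D = ((4*aI*cI - qI*qI : ℤ):ℚ) := by rw [hD, haI', hcI', hqI']; push_cast; ring
  have hddDI : dd * (4*aI*cI - qI*qI) = (r:ℤ)^2 := by
    rw [hDIq] at hdd
    exact_mod_cast hdd
  have hcop : IsCoprime ((r:ℤ)^2) E := by
    have h1 : IsCoprime ((r:ℤ)) E := ⟨4*(r:ℤ)*nx*ny - 2*nb - (r:ℤ)*nb^2, -1, by rw [hEdef]; ring⟩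
    exact h1.pow_left
  have hunit : IsUnit dd := hcop.isUnit_of_dvd' ⟨4*aI*cI - qI*qI, hddDI.symm⟩ ⟨Φ^2, hEd⟩
  have hDIlt : (4*aI*cI - qI*qI : ℤ) < 0 := by
    have := hDneg
    rw [hDIq] at this
    exact_mod_cast this
  have hdd1 : dd = -1 := by
    rcases Int.isUnit_iff.mp hunit with h | h
    · exfalso
      rw [h, one_mul] at hddDI
      have hr2pos : 0 < (r:ℤ)^2 := by positivity
      linarith
    · exact h
  have hDIneg : (4*aI*cI - qI*qI : ℤ) = -(r:ℤ)^2 := by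
    rw [hdd1] at hddDI; linarith
  -- double decompositions
  have hee₁ : B e₁ e₁ = s/D := by
    have h1 := hBe₁ (s/D) (-(q/D))
    rw [← he₁def] at h1
    exact h1
  have hee₂ : B e₂ e₂ = P/D := by
    have h1 := hBe₂ (-(q/D)) (P/D)
    rw [← he₂def] at h1
    exact h1
  have hexp₁ : s/D = (a₁:ℚ)^2*(2*(nx:ℚ)) + 2*(a₁:ℚ)*(b₁:ℚ)*(1/(r:ℚ) + (nb:ℚ)) + (b₁:ℚ)^2*(2*(ny:ℚ)) + 2*(a₁:ℚ)*(k₁:ℚ) + 2*(b₁:ℚ)*(k₃:ℚ) + 2*(nu₁:ℚ) := by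
    rw [← hee₁]
    conv_lhs => rw [he₁dec]
    simp only [map_add, map_smul, LinearMap.add_apply, LinearMap.smul_apply, smul_eq_mul]
    rw [hsymm u₁ x, hsymm u₁ y, hnx0, hnb0, hyx0, hny0, hk₁, hk₃, hnu₁]
    ring
  have hexp₂ : P/D = (a₂:ℚ)^2*(2*(nx:ℚ)) + 2*(a₂:ℚ)*(b₂:ℚ)*(1/(r:ℚ) + (nb:ℚ)) + (b₂:ℚ)^2*(2*(ny:ℚ)) + 2*(a₂:ℚ)*(k₂:ℚ) + 2*(b₂:ℚ)*(k₄:ℚ) + 2*(nu₂:ℚ) := by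
    rw [← hee₂]
    conv_lhs => rw [he₂dec]
    simp only [map_add, map_smul, LinearMap.add_apply, LinearMap.smul_apply, smul_eq_mul]
    rw [hsymm u₂ x, hsymm u₂ y, hnx0, hnb0, hyx0, hny0, hk₂, hk₄, hnu₂]
    ring
  set W₁ : ℤ := a₁*b₁ + r*(a₁^2*nx + a₁*b₁*nb + b₁^2*ny + a₁*k₁ + b₁*k₃ + nu₁) with hW₁def
  set W₂ : ℤ := a₂*b₂ + r*(a₂^2*nx + a₂*b₂*nb + b₂^2*ny + a₂*k₂ + b₂*k₄ + nu₂) with hW₂def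
  have hS₁even : S₁ = 2*W₁ := by
    have h1 : (S₁:ℚ) = (r:ℚ)*(s/D) := by
      field_simp
      linear_combination hS₁
    rw [hexp₁] at h1
    have h2 : (S₁:ℚ) = ((2*W₁ : ℤ):ℚ) := by
      rw [h1, hW₁def]; push_cast; field_simp; ring
    exact_mod_cast h2
  have hP₁even : P₁ = 2*W₂ := by
    have h1 : (P₁:ℚ) = (r:ℚ)*(P/D) := by
      field_simp
      linear_combination hP₁
    rw [hexp₂] at h1
    have h2 : (P₁:ℚ) = ((2*W₂ : ℤ):ℚ) := by
      rw [h1, hW₂def]; push_cast; field_simp; ring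
    exact_mod_cast h2
  -- integer relations: aI = r*AZ etc.
  set AZ : ℤ := -W₂ with hAZdef
  set CZ : ℤ := -W₁ with hCZdef
  set QZ : ℤ := Q₁ with hQZdef
  have hP₁Z : P₁ * (4*aI*cI - qI*qI) = (r:ℤ)*(2*aI) := by
    rw [hDIq, haI'] at hP₁
    exact_mod_cast hP₁
  have hS₁Z : S₁ * (4*aI*cI - qI*qI) = (r:ℤ)*(2*cI) := by
    rw [hDIq, hcI'] at hS₁
    exact_mod_cast hS₁
  have hQ₁Z : Q₁ * (4*aI*cI - qI*qI) = -((r:ℤ)*qI) := by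
    rw [hDIq, hqI'] at hQ₁
    exact_mod_cast hQ₁
  have haIA : aI = (r:ℤ)*AZ := by
    have h1 : (r:ℤ)*(-(r:ℤ)*P₁) = (r:ℤ)*(2*aI) := by
      linear_combination hP₁Z - P₁*hDIneg
    have h2 := mul_left_cancel₀ hrZ h1
    rw [hP₁even] at h2
    rw [hAZdef]
    linarith
  have hcIC : cI = (r:ℤ)*CZ := by
    have h1 : (r:ℤ)*(-(r:ℤ)*S₁) = (r:ℤ)*(2*cI) := by
      linear_combination hS₁Z - S₁*hDIneg
    have h2 := mul_left_cancel₀ hrZ h1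
    rw [hS₁even] at h2
    rw [hCZdef]
    linarith
  have hqIQ : qI = (r:ℤ)*QZ := by
    have h1 : (r:ℤ)*((r:ℤ)*Q₁) = (r:ℤ)*qI := by
      linear_combination -hQ₁Z + Q₁*hDIneg
    have h2 := mul_left_cancel₀ hrZ h1
    rw [hQZdef]
    linarith
  have h4AC : 4*AZ*CZ - QZ*QZ = -1 := by
    rw [haIA, hcIC, hqIQ] at hDIneg
    have h1 : (r:ℤ)^2*(4*AZ*CZ - QZ*QZ + 1) = 0 := by linear_combination hDIneg
    rcases mul_eq_zero.mp h1 with h2 | h2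
    · exact absurd h2 (pow_ne_zero _ hrZ)
    · linarith
  -- final construction
  obtain ⟨aa, bb, cc, dc, hdet, hq1, hq2, hpair⟩ := u_binary AZ QZ CZ h4AC
  have hPq : P = 2*(r:ℚ)*(AZ:ℚ) := by rw [haI', haIA]; push_cast; ring
  have hsq : s = 2*(r:ℚ)*(CZ:ℚ) := by rw [hcI', hcIC]; push_cast; ring
  have hqq2 : q = (r:ℚ)*(QZ:ℚ) := by rw [hqI', hqIQ]; push_cast; ring
  have hq1' : (AZ:ℚ)*aa*aa + (QZ:ℚ)*aa*bb + (CZ:ℚ)*bb*bb = 0 := by exact_mod_cast hq1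
  have hq2' : (AZ:ℚ)*cc*cc + (QZ:ℚ)*cc*dc + (CZ:ℚ)*dc*dc = 0 := by exact_mod_cast hq2
  have hpair' : 2*(AZ:ℚ)*aa*cc + (QZ:ℚ)*((aa:ℚ)*dc + (bb:ℚ)*cc) + 2*(CZ:ℚ)*bb*dc = 1 := by
    exact_mod_cast hpair
  set l : V := ((aa:ℚ)) • l₀ + ((bb:ℚ)) • m₀ with hldef
  set m : V := ((cc:ℚ)) • l₀ + ((dc:ℚ)) • m₀ with hmdef
  have hlL : l ∈ L := (memL _).mpr ⟨aa, bb, hldef⟩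
  have hmL : m ∈ L := (memL _).mpr ⟨cc, dc, hmdef⟩
  refine ⟨l, m, hlL, hmL, ?_, ?_, ?_, ?_⟩
  · -- span equality
    apply le_antisymm
    · rw [hL]
      apply Submodule.span_le.mpr
      intro z hz
      simp only [Set.mem_insert_iff, Set.mem_singleton_iff] at hz
      have hspan : ∀ u v : ℤ, ((u:ℚ)) • l + ((v:ℚ)) • m ∈ Submodule.span ℤ {l, m} := by
        intro u v
        rw [Int.cast_smul_eq_zsmul ℚ u l, Int.cast_smul_eq_zsmul ℚ v m]
        exact Submodule.add_mem _ (Submodule.smul_mem _ _ (Submodule.subset_span (by simp)))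
          (Submodule.smul_mem _ _ (Submodule.subset_span (by simp)))
      rcases hz with rfl | rfl
      · -- l₀
        rcases hdet with h | h
        · have hdet' : (aa:ℚ)*dc - (bb:ℚ)*cc = 1 := by exact_mod_cast h
          have he : ((( dc :ℤ):ℚ)) • l + (((-bb : ℤ):ℚ)) • m = z := by
            rw [hldef, hmdef]
            match_scalars
            · push_cast; linear_combination hdet'
            · push_cast; ring
          rw [← he]; exact hspan _ _
        · have hdet' : (aa:ℚ)*dc - (bb:ℚ)*cc = -1 := by exact_mod_cast h
          have he : (((-dc :ℤ):ℚ)) • l + (((bb : ℤ):ℚ)) • m = z := by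
            rw [hldef, hmdef]
            match_scalars
            · push_cast; linear_combination -hdet'
            · push_cast; ring
          rw [← he]; exact hspan _ _
      · -- m₀
        rcases hdet with h | h
        · have hdet' : (aa:ℚ)*dc - (bb:ℚ)*cc = 1 := by exact_mod_cast h
          have he : (((-cc :ℤ):ℚ)) • l + (((aa : ℤ):ℚ)) • m = z := by
            rw [hldef, hmdef]
            match_scalars
            · push_cast; ring
            · push_cast; linear_combination hdet'
          rw [← he]; exact hspan _ _
        · have hdet' : (aa:ℚ)*dc - (bb:ℚ)*cc = -1 := by exact_mod_cast h
          have he : ((( cc :ℤ):ℚ)) • l + (((-aa : ℤ):ℚ)) • m = z := by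
            rw [hldef, hmdef]
            match_scalars
            · push_cast; ring
            · push_cast; linear_combination -hdet'
          rw [← he]; exact hspan _ _
    · apply Submodule.span_le.mpr
      intro z hz
      simp only [Set.mem_insert_iff, Set.mem_singleton_iff] at hz
      rcases hz with rfl | rfl
      · exact hlL
      · exact hmL
  · rw [hldef, hBexp, hPq, hqq2, hsq]
    linear_combination (2*(r:ℚ))*hq1'
  · rw [hmdef, hBexp, hPq, hqq2, hsq]
    linear_combination (2*(r:ℚ))*hq2'
  · rw [hldef, hmdef, hBexp, hPq, hqq2, hsq]
    linear_combination (r:ℚ)*hpair'
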